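/- Let φ and ψ be IA-endomorphisms of the free group F on x₁,...,xₙ (endomorphisms inducing the identity on F/[F,F]), and let J^a denote the image of the Fox Jacobian matrix in the abelianized group ring ℤ[F/F']. Then J^a_{φ∘ψ} = J^a_φ · J^a_ψ. -/

import Mathlib

open MonoidAlgebra

/-- A system of left Fox derivatives on the group ring `ℤF` of the free group
`F` on `n` generators. -/
structure FoxDerivatives (n : ℕ) where
  d : Fin n → MonoidAlgebra ℤ (FreeGroup (Fin n)) →ₗ[ℤ] MonoidAlgebra ℤ (FreeGroup (Fin n))
  d_gen : ∀ j i : Fin n,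
    d j (of ℤ (FreeGroup (Fin n)) (FreeGroup.of i)) = if i = j then 1 else 0
  d_mul : ∀ (j : Fin n) (g h : FreeGroup (Fin n)),
    d j (of ℤ (FreeGroup (Fin n)) (g * h)) =
      d j (of ℤ (FreeGroup (Fin n)) g) +
        of ℤ (FreeGroup (Fin n)) g * d j (of ℤ (FreeGroup (Fin n)) h)

/-- The projection `ℤF → ℤ[F/F']` onto the abelianized group ring. -/
noncomputable def abProj (n : ℕ) :
    MonoidAlgebra ℤ (FreeGroup (Fin n)) →+*
      MonoidAlgebra ℤ (Abelianization (FreeGroup (Fin n))) :=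
  mapDomainRingHom ℤ (Abelianization.of (G := FreeGroup (Fin n)))

section
variable {n : ℕ}
local notation "F" => FreeGroup (Fin n)
local notation "A" => Abelianization (FreeGroup (Fin n))

lemma abProj_of (g : F) :
    abProj n (of ℤ F g) = of ℤ A (Abelianization.of g) := by
  simp [abProj, mapDomainRingHom, MonoidAlgebra.of_apply, Finsupp.mapDomain_single]

lemma d_one (D : FoxDerivatives n) (j : Fin n) :
    D.d j 1 = 0 := by
  have h := D.d_mul j 1 1
  simp only [mul_one, map_one, one_mul] at h
  exact (left_eq_add.mp h)

lemma abProj_d_inv (D : FoxDerivatives n) (j : Fin n) (g : F) :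
    abProj n (D.d j (of ℤ F g⁻¹)) =
      - of ℤ A (Abelianization.of g)⁻¹ * abProj n (D.d j (of ℤ F g)) := by
  have h := D.d_mul j g g⁻¹
  rw [mul_inv_cancel] at h
  have h2 : of ℤ F g * D.d j (of ℤ F g⁻¹) = - D.d j (of ℤ F g) := by
    rw [map_one, d_one D j] at h
    exact eq_neg_of_add_eq_zero_right h.symm
  have h3 := congrArg (abProj n) h2
  rw [map_mul, map_neg, abProj_of] at h3
  have h4 := congrArg (of ℤ A (Abelianization.of g)⁻¹ * ·) h3
  simp only [← mul_assoc, ← of_apply] at h4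
  rw [← map_mul, inv_mul_cancel, map_one, one_mul] at h4
  rw [h4]; ring

lemma chain (D : FoxDerivatives n) (ψ : F →* F)
    (hψ : ∀ g : F, Abelianization.of (ψ g) = Abelianization.of g) (j : Fin n) (w : F) :
    abProj n (D.d j (of ℤ F (ψ w))) =
      ∑ k, abProj n (D.d k (of ℤ F w)) *
        abProj n (D.d j (of ℤ F (ψ (FreeGroup.of k)))) := by
  induction w using FreeGroup.induction_on with
  | C1 =>
    simp only [map_one, d_one, map_zero, zero_mul, Finset.sum_const_zero]
  | of i =>
    have hp : (pure i : FreeGroup (Fin n)) = FreeGroup.of i := rfl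
    simp only [D.d_gen]
    rw [Finset.sum_eq_single i]
    · simp
    · intro k _ hk
      simp [Ne.symm hk]
    · simp
  | inv_of i ih =>
    have hp : (pure i : FreeGroup (Fin n)) = FreeGroup.of i := rfl
    rw [map_inv, abProj_d_inv, hψ]
    have hterm : ∀ k, abProj n (D.d k (of ℤ F (FreeGroup.of i)⁻¹)) =
        - of ℤ A (Abelianization.of (FreeGroup.of i))⁻¹ *
          abProj n (D.d k (of ℤ F (FreeGroup.of i))) := fun k => abProj_d_inv D k _
    simp only [hterm, D.d_gen]
    rw [ih, Finset.mul_sum]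
    apply Finset.sum_congr rfl
    intro k _
    simp only [D.d_gen]
    ring
  | mul u v ihu ihv =>
    rw [map_mul, D.d_mul, map_add, map_mul, abProj_of, hψ, ihu, ihv]
    have : ∀ k, abProj n (D.d k (of ℤ F (u * v))) =
        abProj n (D.d k (of ℤ F u)) +
          of ℤ A (Abelianization.of u) * abProj n (D.d k (of ℤ F v)) := by
      intro k; rw [D.d_mul, map_add, map_mul, abProj_of]
    simp only [this, add_mul, Finset.sum_add_distrib, Finset.mul_sum, mul_assoc]

end

/-- The abelianized Fox Jacobian matrix `J^a_φ` of an endomorphism `φ`. -/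
noncomputable def abFoxJacobian {n : ℕ} (D : FoxDerivatives n)
    (φ : FreeGroup (Fin n) →* FreeGroup (Fin n)) :
    Matrix (Fin n) (Fin n) (MonoidAlgebra ℤ (Abelianization (FreeGroup (Fin n)))) :=
  Matrix.of fun i j => abProj n (D.d j (of ℤ (FreeGroup (Fin n)) (φ (FreeGroup.of i))))

/-- For IA-endomorphisms `φ, ψ` of the free group (inducing the identity on
`F/[F,F]`), the abelianized Jacobian matrices satisfy
`J^a_{φ∘ψ} = J^a_φ · J^a_ψ`, where `φ∘ψ` sends `xᵢ` to `ψ(φ(xᵢ))`. -/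
theorem ab_fox_jacobian_product_rule {n : ℕ} (D : FoxDerivatives n)
    (φ ψ : FreeGroup (Fin n) →* FreeGroup (Fin n))
    (hφ : ∀ g : FreeGroup (Fin n), Abelianization.of (φ g) = Abelianization.of g)
    (hψ : ∀ g : FreeGroup (Fin n), Abelianization.of (ψ g) = Abelianization.of g) :
    abFoxJacobian D (ψ.comp φ) = abFoxJacobian D φ * abFoxJacobian D ψ := by
  apply Matrix.ext; intro i j
  rw [Matrix.mul_apply]
  simp only [abFoxJacobian, Matrix.of_apply, MonoidHom.comp_apply]
  exact chain D ψ hψ j (φ (FreeGroup.of i))
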